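/- arXiv:2311.05399 — 2 statements merged into one kernel-verified Lean document; each statement's English description precedes it below -/
import Mathlib

section
/- For (λ, μ) ∈ ℂ², (λ, μ) ≠ (0, 0), let Q(λ:μ) be the quadratic form x₀(λx₂ − μx₃) − x₁(μx₄ − λx₃) on ℂ⁵, and for a scalar t ∈ ℂ let P'(t, λ, μ) ⊂ ℂ⁵ be the solution set of the two linear equations t·x₀ = μx₄ − λx₃ and λx₂ − μx₃ = t·x₁. Then: (a) P'(t, λ, μ) is a 3-dimensional subspace on which Q(λ:μ) vanishes identically; and (b) for t₁ ≠ t₂, the subspaces P'(t₁, λ, μ) and P'(t₂, λ, μ) are distinct and intersect in the 1-dimensional subspace {x₀ = x₁ = 0, λx₂ = μx₃, μx₄ = λx₃}. -/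
/-- The solution set `P'(t, λ, μ) ⊆ ℂ⁵` of the two linear equations
`t·x₀ = μx₄ − λx₃` and `λx₂ − μx₃ = t·x₁`. -/
noncomputable def planeP' (t l m : ℂ) : Submodule ℂ (Fin 5 → ℂ) where
  carrier := {x | t * x 0 = m * x 4 - l * x 3 ∧ l * x 2 - m * x 3 = t * x 1}
  add_mem' := by
    rintro a b ⟨ha1, ha2⟩ ⟨hb1, hb2⟩
    refine ⟨?_, ?_⟩ <;> simp only [Pi.add_apply]
    · linear_combination ha1 + hb1
    · linear_combination ha2 + hb2
  zero_mem' := by simp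
  smul_mem' := by
    rintro c a ⟨ha1, ha2⟩
    refine ⟨?_, ?_⟩ <;> simp only [Pi.smul_apply, smul_eq_mul]
    · linear_combination c * ha1
    · linear_combination c * ha2

/-- The subspace `{x₀ = x₁ = 0, λx₂ = μx₃, μx₄ = λx₃} ⊆ ℂ⁵`. -/
noncomputable def lineL (l m : ℂ) : Submodule ℂ (Fin 5 → ℂ) where
  carrier := {x | x 0 = 0 ∧ x 1 = 0 ∧ l * x 2 = m * x 3 ∧ m * x 4 = l * x 3}
  add_mem' := by
    rintro a b ⟨ha0, ha1, ha2, ha3⟩ ⟨hb0, hb1, hb2, hb3⟩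
    refine ⟨?_, ?_, ?_, ?_⟩ <;> simp only [Pi.add_apply]
    · rw [ha0, hb0, add_zero]
    · rw [ha1, hb1, add_zero]
    · linear_combination ha2 + hb2
    · linear_combination ha3 + hb3
  zero_mem' := by simp
  smul_mem' := by
    rintro c a ⟨ha0, ha1, ha2, ha3⟩
    refine ⟨?_, ?_, ?_, ?_⟩ <;> simp only [Pi.smul_apply, smul_eq_mul]
    · rw [ha0, mul_zero]
    · rw [ha1, mul_zero]
    · linear_combination c * ha2
    · linear_combination c * ha3

lemma mem_planeP' {t l m : ℂ} {x : Fin 5 → ℂ} :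
    x ∈ planeP' t l m ↔ (t * x 0 = m * x 4 - l * x 3 ∧ l * x 2 - m * x 3 = t * x 1) := Iff.rfl

lemma mem_lineL {l m : ℂ} {x : Fin 5 → ℂ} :
    x ∈ lineL l m ↔ (x 0 = 0 ∧ x 1 = 0 ∧ l * x 2 = m * x 3 ∧ m * x 4 = l * x 3) := Iff.rfl

/-- The linear map whose kernel is `planeP' t l m`. -/
noncomputable def phiMap (t l m : ℂ) : (Fin 5 → ℂ) →ₗ[ℂ] ℂ × ℂ where
  toFun x := (t * x 0 - (m * x 4 - l * x 3), l * x 2 - m * x 3 - t * x 1)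
  map_add' a b := by simp only [Pi.add_apply, Prod.mk_add_mk]; exact Prod.ext (by ring) (by ring)
  map_smul' c a := by
    simp only [Pi.smul_apply, smul_eq_mul, RingHom.id_apply, Prod.smul_mk, smul_eq_mul]
    exact Prod.ext (by ring) (by ring)

lemma planeP'_eq_ker (t l m : ℂ) : planeP' t l m = LinearMap.ker (phiMap t l m) := by
  ext x
  simp only [mem_planeP', LinearMap.mem_ker, phiMap, LinearMap.coe_mk, AddHom.coe_mk,
    Prod.mk_eq_zero, sub_eq_zero]

lemma phiMap_surj (t l m : ℂ) (h : (l, m) ≠ (0, 0)) : Function.Surjective (phiMap t l m) := by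
  rintro ⟨y1, y2⟩
  by_cases hm : m = 0
  · have hl : l ≠ 0 := by
      intro hl; exact h (by simp [hl, hm])
    refine ⟨![0, 0, (y2 + m * (y1 / l)) / l, y1 / l, 0], ?_⟩
    simp only [phiMap, LinearMap.coe_mk, AddHom.coe_mk, Matrix.cons_val_zero, Matrix.cons_val_one,
      Matrix.head_cons, Matrix.cons_val_two, Matrix.tail_cons, Matrix.cons_val_three,
      Matrix.cons_val_four, Prod.mk.injEq]
    constructor
    · field_simp; ring
    · field_simp; ring
  · refine ⟨![0, 0, 0, -y2 / m, (l * (-y2 / m) - y1) / m], ?_⟩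
    simp only [phiMap, LinearMap.coe_mk, AddHom.coe_mk, Matrix.cons_val_zero, Matrix.cons_val_one,
      Matrix.head_cons, Matrix.cons_val_two, Matrix.tail_cons, Matrix.cons_val_three,
      Matrix.cons_val_four, Prod.mk.injEq]
    constructor
    · field_simp; ring
    · field_simp; ring

lemma finrank_planeP' (t l m : ℂ) (h : (l, m) ≠ (0, 0)) :
    Module.finrank ℂ (planeP' t l m) = 3 := by
  have hr := (phiMap t l m).finrank_range_add_finrank_ker
  rw [LinearMap.range_eq_top.mpr (phiMap_surj t l m h), finrank_top] at hr
  simp only [Module.finrank_prod, Module.finrank_self, Module.finrank_fintype_fun_eq_card,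
    Fintype.card_fin] at hr
  rw [planeP'_eq_ker]
  omega

lemma lineL_eq_span (l m : ℂ) (h : (l, m) ≠ (0, 0)) :
    ∃ v : Fin 5 → ℂ, v ≠ 0 ∧ lineL l m = ℂ ∙ v := by
  by_cases hm : m = 0
  · have hl : l ≠ 0 := fun hl => h (by simp [hl, hm])
    refine ⟨![0, 0, 0, 0, 1], ?_, ?_⟩
    · intro hv
      have := congrFun hv 4
      simp at this
    · apply le_antisymm
      · intro x hx
        rw [Submodule.mem_span_singleton]
        obtain ⟨h0, h1, h2, h3⟩ := mem_lineL.mp hx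
        rw [hm, zero_mul] at h2 h3
        have hx2 : x 2 = 0 := by
          rcases mul_eq_zero.mp h2 with h' | h'
          · exact absurd h' hl
          · exact h'
        have hx3 : x 3 = 0 := by
          rcases mul_eq_zero.mp h3.symm with h' | h'
          · exact absurd h' hl
          · exact h'
        refine ⟨x 4, funext fun i => ?_⟩
        fin_cases i
        · simp [h0]
        · simp [h1]
        · simp [hx2]
        · simp [hx3]
        · simp
      · rw [Submodule.span_le, Set.singleton_subset_iff, SetLike.mem_coe, mem_lineL]
        norm_num [hm]
        exact ⟨Or.inr rfl, Or.inr rfl⟩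
  · refine ⟨![0, 0, m * m, l * m, l * l], ?_, ?_⟩
    · intro hv
      have := congrFun hv 2
      simp only [Matrix.cons_val_two, Matrix.tail_cons, Matrix.head_cons, Pi.zero_apply,
        mul_eq_zero, or_self] at this
      exact hm this
    · apply le_antisymm
      · intro x hx
        rw [Submodule.mem_span_singleton]
        obtain ⟨h0, h1, h2, h3⟩ := mem_lineL.mp hx
        refine ⟨x 2 / (m * m), funext fun i => ?_⟩
        fin_cases i
        · simp [h0]
        · simp [h1]
        · simp
          field_simp
        · simp
          field_simp
          linear_combination h2
        · simp
          field_simp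
          linear_combination l * h2 - m * h3
      · rw [Submodule.span_le, Set.singleton_subset_iff, SetLike.mem_coe, mem_lineL]
        refine ⟨by simp, by simp, by simp; ring, by simp; ring⟩

lemma finrank_lineL (l m : ℂ) (h : (l, m) ≠ (0, 0)) : Module.finrank ℂ (lineL l m) = 1 := by
  obtain ⟨v, hv, hspan⟩ := lineL_eq_span l m h
  rw [hspan, finrank_span_singleton hv]

lemma planeP'_inter (l m t₁ t₂ : ℂ) (ht : t₁ ≠ t₂) :
    planeP' t₁ l m ⊓ planeP' t₂ l m = lineL l m := by
  have hsub : t₁ - t₂ ≠ 0 := sub_ne_zero.mpr ht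
  ext x
  rw [Submodule.mem_inf, mem_planeP', mem_planeP', mem_lineL]
  constructor
  · rintro ⟨⟨h11, h12⟩, ⟨h21, h22⟩⟩
    have hx0 : x 0 = 0 := by
      have : (t₁ - t₂) * x 0 = 0 := by linear_combination h11 - h21
      exact (mul_eq_zero.mp this).resolve_left hsub
    have hx1 : x 1 = 0 := by
      have : (t₁ - t₂) * x 1 = 0 := by linear_combination h22 - h12
      exact (mul_eq_zero.mp this).resolve_left hsub
    refine ⟨hx0, hx1, ?_, ?_⟩
    · linear_combination h12 + t₁ * hx1
    · linear_combination -h11 + t₁ * hx0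
  · rintro ⟨h0, h1, h2, h3⟩
    exact ⟨⟨by rw [h0]; linear_combination -h3, by rw [h1]; linear_combination h2⟩,
      ⟨by rw [h0]; linear_combination -h3, by rw [h1]; linear_combination h2⟩⟩

/-- For the pencil `Q(λ:μ) = x₀(λx₂ − μx₃) − x₁(μx₄ − λx₃)` with `(λ, μ) ≠ (0, 0)`:
(a) each `P'(t, λ, μ)` is a 3-dimensional subspace on which `Q(λ:μ)` vanishes identically;
(b) for `t₁ ≠ t₂` the subspaces `P'(t₁, λ, μ)` and `P'(t₂, λ, μ)` are distinct and their
intersection is the 1-dimensional subspace `{x₀ = x₁ = 0, λx₂ = μx₃, μx₄ = λx₃}`. -/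
theorem planeP'_dim_and_intersection (l m : ℂ) (h : (l, m) ≠ (0, 0)) :
    (∀ t : ℂ, Module.finrank ℂ (planeP' t l m) = 3 ∧
      ∀ x : Fin 5 → ℂ, x ∈ planeP' t l m →
        x 0 * (l * x 2 - m * x 3) - x 1 * (m * x 4 - l * x 3) = 0) ∧
    (∀ t₁ t₂ : ℂ, t₁ ≠ t₂ →
      planeP' t₁ l m ≠ planeP' t₂ l m ∧
      planeP' t₁ l m ⊓ planeP' t₂ l m = lineL l m ∧
      Module.finrank ℂ (lineL l m) = 1) := by
  constructor
  · intro t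
    refine ⟨finrank_planeP' t l m h, ?_⟩
    rintro x ⟨h1, h2⟩
    linear_combination x 0 * h2 + x 1 * h1
  · intro t₁ t₂ ht
    have hinter := planeP'_inter l m t₁ t₂ ht
    refine ⟨?_, hinter, finrank_lineL l m h⟩
    intro heq
    have : planeP' t₁ l m = lineL l m := by
      rw [← hinter, heq, inf_idem]
    have h3 := finrank_planeP' t₁ l m h
    rw [this, finrank_lineL l m h] at h3
    exact absurd h3 (by norm_num)
end

section
/- Let A and B be symmetric 5×5 complex matrices that are linearly independent, and suppose that rank(λA + μB) ≤ 3 for all (λ, μ) ∈ ℂ². Then there exists (λ, μ) ≠ (0, 0) such that rank(λA + μB) ≤ 2. -/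
open Matrix Polynomial Submodule Module

open Matrix Polynomial Submodule Module

/-- Extract three independent members from a family spanning dimension ≥ 3. -/
lemma exists_independent_triple {ι W : Type*} [Fintype ι] [AddCommGroup W] [Module ℂ W]
    (v : ι → W) (h : 3 ≤ finrank ℂ (span ℂ (Set.range v))) :
    ∃ f : Fin 3 → ι, LinearIndependent ℂ (v ∘ f) := by
  obtain ⟨b, hsub, hspan, hind⟩ := exists_linearIndependent ℂ (Set.range v)
  have hbfin : b.Finite := (Set.finite_range v).subset hsub
  haveI := hbfin.fintype
  have hcard : 3 ≤ Fintype.card b := by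
    have h1 : finrank ℂ (span ℂ b) = b.toFinset.card := finrank_span_set_eq_card hind
    rw [hspan] at h1
    rw [← Set.toFinset_card]
    omega
  obtain ⟨e⟩ := Function.Embedding.nonempty_of_card_le (by simpa using hcard :
    Fintype.card (Fin 3) ≤ Fintype.card b)
  have hu : LinearIndependent ℂ (fun j : Fin 3 => (e j : W)) := hind.comp e e.injective
  have hmem : ∀ j : Fin 3, (e j : W) ∈ Set.range v := fun j => hsub (e j).2
  choose f hf using hmem
  exact ⟨f, by convert hu using 1; funext j; exact hf j⟩

/-- If all 3×3 minors of a 5×5 complex matrix vanish, the rank is at most 2. -/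
lemma rank_le_two_of_minors (M : Matrix (Fin 5) (Fin 5) ℂ)
    (hm : ∀ f g : Fin 3 → Fin 5, (M.submatrix f g).det = 0) : M.rank ≤ 2 := by
  by_contra hr
  push_neg at hr
  have h1 : 3 ≤ finrank ℂ (span ℂ (Set.range M)) := by
    have e : M.rank = finrank ℂ (span ℂ (Set.range M)) := rank_eq_finrank_span_row M; omega
  obtain ⟨f, hf⟩ := exists_independent_triple M h1
  set N : Matrix (Fin 3) (Fin 5) ℂ := M.submatrix f id with hNdef
  have hN : LinearIndependent ℂ (fun j : Fin 3 => N j) := hf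
  have hrN : N.rank = 3 := by
    rw [LinearIndependent.rank_matrix (M := N) hN]; simp
  have h2 : 3 ≤ finrank ℂ (span ℂ (Set.range Nᵀ)) := by
    have e : Nᵀ.rank = finrank ℂ (span ℂ (Set.range Nᵀ)) := rank_eq_finrank_span_row Nᵀ
    rw [rank_transpose, hrN] at e; omega
  obtain ⟨g, hg⟩ := exists_independent_triple Nᵀ h2
  have hunit : IsUnit (Nᵀ.submatrix g id) :=
    linearIndependent_rows_iff_isUnit.mp hg
  have hdet : (Nᵀ.submatrix g id).det ≠ 0 := by
    intro h0
    exact (Matrix.isUnit_iff_isUnit_det _ |>.mp hunit).ne_zero (by rw [h0])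
  apply hdet
  have : Nᵀ.submatrix g id = (M.submatrix f g)ᵀ := by
    ext j k
    simp [hNdef, Matrix.submatrix_apply, Matrix.transpose_apply]
  rw [this, Matrix.det_transpose]
  exact hm f g

/-- A 5×5 matrix of rank ≤ 3 factors through ℂ³. -/
lemma exists_factor (M : Matrix (Fin 5) (Fin 5) ℂ) (h : M.rank ≤ 3) :
    ∃ (P : Matrix (Fin 5) (Fin 3) ℂ) (Q : Matrix (Fin 3) (Fin 5) ℂ), M = P * Q := by
  obtain ⟨b, hsub, hspan, hind⟩ := exists_linearIndependent ℂ (Set.range M)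
  have hbfin : b.Finite := (Set.finite_range M).subset hsub
  haveI := hbfin.fintype
  have hcard : b.toFinset.card ≤ 3 := by
    have h1 : finrank ℂ (span ℂ b) = b.toFinset.card := finrank_span_set_eq_card hind
    rw [hspan] at h1; have e : M.rank = finrank ℂ (span ℂ (Set.range M)) := rank_eq_finrank_span_row M
    omega
  set s : Finset (Fin 5 → ℂ) := b.toFinset with hs
  let w : Fin 3 → (Fin 5 → ℂ) := fun j =>
    if hj : (j : ℕ) < s.card then (s.equivFin.symm ⟨j, hj⟩ : Fin 5 → ℂ) else 0
  have hbw : b ⊆ Set.range w := by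
    intro x hx
    have hxs : x ∈ s := by simpa [hs] using hx
    set k := s.equivFin ⟨x, hxs⟩ with hk
    have hk3 : (k : ℕ) < 3 := lt_of_lt_of_le k.2 hcard
    refine ⟨⟨k, hk3⟩, ?_⟩
    have : ((⟨k, hk3⟩ : Fin 3) : ℕ) < s.card := k.2
    simp only [w, dif_pos this]
    have : (⟨((⟨(k : ℕ), hk3⟩ : Fin 3) : ℕ), this⟩ : Fin s.card) = k := by
      ext; rfl
    rw [this, hk, Equiv.symm_apply_apply]
  have hrow : ∀ i, M i ∈ span ℂ (Set.range w) := by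
    intro i
    have h1 : M i ∈ span ℂ (Set.range M) := subset_span ⟨i, rfl⟩
    rw [← hspan] at h1
    exact (span_le.mpr (hbw.trans subset_span)) h1
  have hex : ∀ i, ∃ c : Fin 3 → ℂ, ∑ j, c j • w j = M i := by
    intro i
    exact (mem_span_range_iff_exists_fun ℂ).mp (hrow i)
  choose c hc using hex
  refine ⟨Matrix.of (fun i j => c i j), Matrix.of (fun j k => w j k), ?_⟩
  ext i k
  have := congrFun (hc i) k
  simp only [Finset.sum_apply, Pi.smul_apply, smul_eq_mul] at this
  simp [Matrix.mul_apply, this]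

/-- The matrix of polynomials `A + t B`. -/
noncomputable def penMat (A B : Matrix (Fin 5) (Fin 5) ℂ) : Matrix (Fin 5) (Fin 5) ℂ[X] :=
  Matrix.of fun i j => C (A i j) + X * C (B i j)

/-- 3×3 minors of the pencil, as polynomials. -/
noncomputable def minorPoly (A B : Matrix (Fin 5) (Fin 5) ℂ) (f g : Fin 3 → Fin 5) : ℂ[X] :=
  ((penMat A B).submatrix f g).det

lemma eval_minorPoly (A B : Matrix (Fin 5) (Fin 5) ℂ) (s : ℂ) (f g : Fin 3 → Fin 5) :
    (minorPoly A B f g).eval s = ((A + s • B).submatrix f g).det := by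
  rw [minorPoly, show (eval s : ℂ[X] → ℂ) = (evalRingHom s : ℂ[X] → ℂ) from rfl]
  rw [RingHom.map_det]
  congr 1
  ext i j
  simp only [RingHom.mapMatrix_apply, Matrix.map_apply, Matrix.submatrix_apply, penMat,
    Matrix.of_apply, coe_evalRingHom, eval_add, eval_mul, eval_C, eval_X, Matrix.add_apply,
    Matrix.smul_apply, smul_eq_mul]

lemma natDegree_minorPoly_le (A B : Matrix (Fin 5) (Fin 5) ℂ) (f g : Fin 3 → Fin 5) :
    (minorPoly A B f g).natDegree ≤ 3 := by
  have hentry : ∀ (i j : Fin 3), (((penMat A B).submatrix f g) i j).natDegree ≤ 1 := by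
    intro i j
    simp only [penMat, Matrix.submatrix_apply, Matrix.of_apply]
    refine (natDegree_add_le _ _).trans (max_le (by simp) (natDegree_mul_le.trans (by simp)))
  rw [minorPoly, Matrix.det_apply']
  refine natDegree_sum_le_of_forall_le _ _ ?_
  intro σ _
  refine natDegree_mul_le.trans ?_
  have h2 : (Equiv.Perm.sign σ : ℂ[X]).natDegree = 0 := by
    rcases Int.units_eq_one_or (Equiv.Perm.sign σ) with h | h <;> simp [h]
  have h3 : (∏ i, ((penMat A B).submatrix f g) (σ i) i).natDegree ≤ 3 := by
    refine (natDegree_prod_le _ _).trans ?_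
    calc ∑ i, (((penMat A B).submatrix f g) (σ i) i).natDegree ≤ ∑ _i : Fin 3, 1 :=
          Finset.sum_le_sum (fun i _ => hentry (σ i) i)
      _ = 3 := by simp
  omega

lemma minorPoly_symm {A B : Matrix (Fin 5) (Fin 5) ℂ} (hA : A.IsSymm) (hB : B.IsSymm)
    (f g : Fin 3 → Fin 5) : minorPoly A B f g = minorPoly A B g f := by
  rw [minorPoly, minorPoly, ← Matrix.det_transpose]
  congr 1
  ext i j
  simp only [Matrix.transpose_apply, Matrix.submatrix_apply, penMat, Matrix.of_apply]
  rw [← hA.apply, ← hB.apply]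

lemma minorPoly_mul {A B : Matrix (Fin 5) (Fin 5) ℂ}
    (h3 : ∀ s : ℂ, (A + s • B).rank ≤ 3) (f g f' g' : Fin 3 → Fin 5) :
    minorPoly A B f g * minorPoly A B f' g' = minorPoly A B f g' * minorPoly A B f' g := by
  apply Polynomial.funext
  intro s
  simp only [eval_mul, eval_minorPoly]
  obtain ⟨P, Q, hPQ⟩ := exists_factor (A + s • B) (h3 s)
  have key : ∀ (u v : Fin 3 → Fin 5), ((A + s • B).submatrix u v).det =
      (P.submatrix u id).det * (Q.submatrix id v).det := by
    intro u v
    rw [hPQ, Matrix.submatrix_mul P Q u id v Function.bijective_id, Matrix.det_mul]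
  rw [key f g, key f' g', key f g', key f' g]
  ring

open Matrix

/-- If `A, B` are linearly independent symmetric `5 × 5` complex matrices such that every
member `λA + μB` of the pencil they span has rank `≤ 3`, then some nonzero member of the
pencil has rank `≤ 2`. (There are no lines contained in `Z₃ ∖ Z₂`: every pencil of
quadrics of rank `≤ 3` contains a member of rank `≤ 2`.) -/
theorem pencil_rank_three_has_rank_two_member
    (A B : Matrix (Fin 5) (Fin 5) ℂ) (hA : A.IsSymm) (hB : B.IsSymm)
    (hind : LinearIndependent ℂ ![A, B])
    (h : ∀ l m : ℂ, (l • A + m • B).rank ≤ 3) :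
    ∃ l m : ℂ, (l, m) ≠ (0, 0) ∧ (l • A + m • B).rank ≤ 2 := by
  have h3 : ∀ s : ℂ, (A + s • B).rank ≤ 3 := by
    intro s; have := h 1 s; rwa [one_smul] at this
  set D := minorPoly A B with hD
  have hid : ∀ f g f' g', D f g * D f' g' = D f g' * D f' g := minorPoly_mul h3
  have hsymm : ∀ f g, D f g = D g f := minorPoly_symm hA hB
  have hsq : ∀ f g, D f g * D f g = D f f * D g g := by
    intro f g
    have hthis := hid f g g f
    rw [← hsymm f g] at hthis
    exact hthis
  by_cases hall : ∀ f : Fin 3 → Fin 5, D f f = 0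
  · refine ⟨1, 0, by simp, ?_⟩
    rw [one_smul, zero_smul, add_zero]
    apply rank_le_two_of_minors
    intro f g
    have h0 : D f g = 0 := by
      have hthis := hsq f g
      rw [hall f, hall g, zero_mul] at hthis
      exact mul_self_eq_zero.mp hthis
    have hthis := eval_minorPoly A B 0 f g
    rw [hD] at h0
    rw [h0] at hthis
    simpa using hthis.symm
  · push_neg at hall
    obtain ⟨f₀, hf₀⟩ := hall
    have hidf : ∀ f, D f₀ f₀ * D f f = D f₀ f * D f₀ f := by
      intro f
      rw [hid f₀ f₀ f f, ← hsymm f₀ f]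
    by_cases hodd : ∃ s : ℂ, Odd (rootMultiplicity s (D f₀ f₀))
    · obtain ⟨s₀, hs₀⟩ := hodd
      have hdiag : ∀ f, (D f f).eval s₀ = 0 := by
        intro f
        rcases eq_or_ne (D f f) 0 with h0 | h0
        · rw [h0, eval_zero]
        · have hne : D f₀ f₀ * D f f ≠ 0 := mul_ne_zero hf₀ h0
          have hne2 : D f₀ f ≠ 0 := by
            intro hz
            apply hne
            rw [hidf f, hz, mul_zero]
          have e1 := Polynomial.rootMultiplicity_mul (x := s₀) hne
          have e2 := Polynomial.rootMultiplicity_mul (x := s₀) (mul_ne_zero hne2 hne2)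
          rw [hidf f, e2] at e1
          have hpos : 0 < rootMultiplicity s₀ (D f f) := by
            obtain ⟨k, hk⟩ := hs₀; omega
          exact (rootMultiplicity_pos h0).mp hpos
      refine ⟨1, s₀, by simp, ?_⟩
      rw [one_smul]
      apply rank_le_two_of_minors
      intro f g
      have hthis : (D f g).eval s₀ * (D f g).eval s₀ = 0 := by
        rw [← eval_mul, hsq f g, eval_mul, hdiag f, zero_mul]
      rw [← eval_minorPoly A B s₀ f g]
      exact mul_self_eq_zero.mp hthis
    · push_neg at hodd
      have heven : ∀ s : ℂ, Even (rootMultiplicity s (D f₀ f₀)) := by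
        intro s; exact Nat.not_odd_iff_even.mp (hodd s)
      have heven_deg : Even ((D f₀ f₀).natDegree) := by
        have hsplit : (D f₀ f₀).roots.card = (D f₀ f₀).natDegree :=
          Polynomial.splits_iff_card_roots.mp (IsAlgClosed.splits _)
        rw [← hsplit, ← Multiset.toFinset_sum_count_eq]
        have hdvd : 2 ∣ ∑ a ∈ (D f₀ f₀).roots.toFinset, (D f₀ f₀).roots.count a := by
          refine Finset.dvd_sum ?_
          intro a _
          rw [Polynomial.count_roots]
          obtain ⟨k, hk⟩ := heven a
          exact ⟨k, by omega⟩
        obtain ⟨k, hk⟩ := hdvd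
        exact ⟨k, by omega⟩
      have hdiag2 : ∀ f, (D f f).natDegree ≤ 2 := by
        intro f
        rcases eq_or_ne (D f f) 0 with h0 | h0
        · simp [h0]
        · have hne : D f₀ f₀ * D f f ≠ 0 := mul_ne_zero hf₀ h0
          have hne2 : D f₀ f ≠ 0 := by
            intro hz; apply hne; rw [hidf f, hz, mul_zero]
          have e : (D f₀ f₀).natDegree + (D f f).natDegree
              = (D f₀ f).natDegree + (D f₀ f).natDegree := by
            rw [← natDegree_mul hf₀ h0, hidf f, natDegree_mul hne2 hne2]
          have hle := natDegree_minorPoly_le A B f f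
          rw [← hD] at hle
          obtain ⟨k, hk⟩ := heven_deg
          omega
      have hdeg : ∀ f g, (D f g).natDegree ≤ 2 := by
        intro f g
        rcases eq_or_ne (D f g) 0 with h0 | h0
        · simp [h0]
        · have hne : D f f * D g g ≠ 0 := by rw [← hsq f g]; exact mul_ne_zero h0 h0
          obtain ⟨hne1, hne2⟩ := mul_ne_zero_iff.mp hne
          have e : (D f g).natDegree + (D f g).natDegree
              = (D f f).natDegree + (D g g).natDegree := by
            rw [← natDegree_mul h0 h0, hsq f g, natDegree_mul hne1 hne2]
          have := hdiag2 f
          have := hdiag2 g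
          omega
      have HB : ∀ f g : Fin 3 → Fin 5, (B.submatrix f g).det = 0 := by
        intro f g
        set Qp : ℂ[X] := C ((D f g).coeff 2) * X + C ((D f g).coeff 1) * X ^ 2
            + C ((D f g).coeff 0) * X ^ 3 with hQp
        have key : ∀ s : ℂ, s ≠ 0 → (minorPoly B A f g).eval s = Qp.eval s := by
          intro s hs
          have h1 : (minorPoly B A f g).eval s = ((B + s • A).submatrix f g).det :=
            eval_minorPoly B A s f g
          have h2 : B + s • A = s • (A + s⁻¹ • B) := by
            rw [smul_add, smul_smul, mul_inv_cancel₀ hs, one_smul, add_comm]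
          have h4 : ((s • (A + s⁻¹ • B)).submatrix f g).det
              = s ^ 3 * ((A + s⁻¹ • B).submatrix f g).det := by
            have : (s • (A + s⁻¹ • B)).submatrix f g = s • ((A + s⁻¹ • B).submatrix f g) := rfl
            rw [this, Matrix.det_smul]
            norm_num
          have h5 : ((A + s⁻¹ • B).submatrix f g).det = (D f g).eval s⁻¹ := by
            rw [hD, eval_minorPoly A B s⁻¹ f g]
          have h6 : (D f g).eval s⁻¹
              = (D f g).coeff 0 + (D f g).coeff 1 * s⁻¹ + (D f g).coeff 2 * (s⁻¹) ^ 2 := by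
            rw [eval_eq_sum_range' (lt_of_le_of_lt (hdeg f g) (by norm_num : (2:ℕ) < 3))]
            rw [Finset.sum_range_succ, Finset.sum_range_succ, Finset.sum_range_one]
            ring
          rw [h1, h2, h4, h5, h6, hQp]
          simp only [eval_add, eval_mul, eval_C, eval_X, eval_pow]
          field_simp
          ring
        have hEQ : minorPoly B A f g = Qp := by
          apply eq_of_infinite_eval_eq
          have hinf : ({x : ℂ | x ≠ 0}).Infinite := by
            have : ({x : ℂ | x ≠ 0}) = {(0 : ℂ)}ᶜ := by ext x; simp
            rw [this]
            exact (Set.finite_singleton _).infinite_compl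
          exact hinf.mono (fun x hx => key x hx)
        have h0 : (minorPoly B A f g).eval 0 = (B.submatrix f g).det := by
          have hthis := eval_minorPoly B A 0 f g
          simpa using hthis
        rw [← h0, hEQ, hQp]
        simp
      refine ⟨0, 1, by simp, ?_⟩
      rw [zero_smul, one_smul, zero_add]
      exact rank_le_two_of_minors B HB
end
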